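/- arXiv:1703.10702 — 2 statements merged into one kernel-verified Lean document; each statement's English description precedes it below -/
import Mathlib

section
/- Let G be a simple graph that is the graph of a simple d-polytope with 3d vertices (d ≥ 3, d even). If some facet F has 3d-2 vertices, then counting edges leaving F (exactly 3d-2, one per vertex of F) against edges incident to the two external vertices (at most 2d-2 after accounting for the possible edge between them, and exactly 2(d-1) if they are adjacent) yields 2d-2 = 3d-2, which is impossible for d > 0. Hence no facet of a simple d-polytope with 3d vertices has 3d-2 vertices. -/
/-- Let `G` be the graph of a simple `d`-polytope with `3d` vertices (`d ≥ 3`, `d` even),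
so `G` is `d`-regular.  If some facet `F` had `3d - 2` vertices, then — since every vertex
of `F` has exactly one neighbour outside `F` — counting the `3d - 2` edges leaving `F`
against the edges incident to the two external vertices yields a contradiction.  Hence no
facet of a simple `d`-polytope with `3d` vertices has `3d - 2` vertices. -/
theorem stmt_14 {V : Type*} [Fintype V] [DecidableEq V] (G : SimpleGraph V)
    [DecidableRel G.Adj] (d : ℕ) (hd : 3 ≤ d) (heven : Even d)
    (hreg : G.IsRegularOfDegree d) (hcard : Fintype.card V = 3 * d)
    (F : Finset V) (hF : F.card = 3 * d - 2)
    (hshep : ∀ v ∈ F, (G.neighborFinset v \ F).card = 1) : False := by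
  -- the complement of F has exactly 2 vertices
  have hcompl : Fᶜ.card = 2 := by
    have h := Finset.card_compl F
    rw [hcard, hF] at h
    omega
  -- rewrite N(v) \ F as a filter of Fᶜ
  have hsd : ∀ v : V, G.neighborFinset v \ F = Fᶜ.filter (fun u => G.Adj v u) := by
    intro v
    ext u
    simp [SimpleGraph.mem_neighborFinset, and_comm]
  -- double counting the edges between F and Fᶜ
  have hdc : ∑ v ∈ F, (Fᶜ.filter (fun u => G.Adj v u)).card
      = ∑ u ∈ Fᶜ, (F.filter (fun v => G.Adj v u)).card := by
    simp only [Finset.card_filter]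
    exact Finset.sum_comm
  -- left side equals 3d - 2
  have hleft : ∑ v ∈ F, (Fᶜ.filter (fun u => G.Adj v u)).card = 3 * d - 2 := by
    calc ∑ v ∈ F, (Fᶜ.filter (fun u => G.Adj v u)).card
        = ∑ v ∈ F, 1 := Finset.sum_congr rfl (fun v hv => by rw [← hsd]; exact hshep v hv)
      _ = F.card := by simp
      _ = 3 * d - 2 := hF
  -- right side is at most 2d
  have hright : ∑ u ∈ Fᶜ, (F.filter (fun v => G.Adj v u)).card ≤ 2 * d := by
    calc ∑ u ∈ Fᶜ, (F.filter (fun v => G.Adj v u)).card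
        ≤ ∑ _u ∈ Fᶜ, d := by
          refine Finset.sum_le_sum (fun u _ => ?_)
          have hsub : F.filter (fun v => G.Adj v u) ⊆ G.neighborFinset u := by
            intro v hv
            simp only [Finset.mem_filter] at hv
            exact (SimpleGraph.mem_neighborFinset _ _ _).2 hv.2.symm
          calc (F.filter (fun v => G.Adj v u)).card
              ≤ (G.neighborFinset u).card := Finset.card_le_card hsub
            _ = d := hreg u
      _ = 2 * d := by rw [Finset.sum_const, hcompl, smul_eq_mul]
  omega
end

section
/- Suppose a 5-polytope P has 13 vertices, 35 edges, and a facet F with 7 vertices and 17 or more edges. Let e_b be the number of edges between F and the 6 vertices outside F, and e_a the number of edges among those 6 vertices. Then e_a + e_b ≤ 18 and 2e_a + e_b ≥ 30 force e_a ≥ 12 and e_b ≤ 6; but e_b ≥ 7 (each vertex of F has a neighbour outside F), a contradiction. Hence no facet of such a P has 7 vertices and ≥ 17 edges. -/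
/-- Suppose a 5-polytope `P` has 13 vertices, 35 edges, and a facet `F` with 7 vertices
and 17 or more edges.  Let `e_b` be the number of edges between `F` and the 6 vertices
outside `F` (each of degree at least 5), and `e_a` the number of edges among those 6
vertices.  Then `e_a + e_b ≤ 18` and `2 e_a + e_b ≥ 30` force `e_a ≥ 12` and `e_b ≤ 6`;
but `e_b ≥ 7` since each vertex of `F` has a neighbour outside `F` — a contradiction.
Hence no facet of such a `P` has 7 vertices and at least 17 edges. -/
theorem stmt_18 {V : Type*} [Fintype V] (G : SimpleGraph V) [DecidableRel G.Adj]
    (hV : Fintype.card V = 13) (hE : Nat.card G.edgeSet = 35)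
    (F : Finset V) (hF : F.card = 7)
    (hFedges : 17 ≤ {e ∈ G.edgeSet | ∀ v ∈ e, v ∈ F}.ncard)
    (hdeg : ∀ v : V, v ∉ F → 5 ≤ G.degree v)
    (hout : ∀ v ∈ F, ∃ w, w ∉ F ∧ G.Adj v w) : False := by
  classical
  set E := G.edgeFinset with hEdef
  have hEcard : E.card = 35 := by
    rw [← hE, Nat.card_coe_set_eq, Set.ncard_eq_toFinset_card']
    congr 1
  set pA : Sym2 V → Prop := fun e => ∀ v ∈ e, v ∈ F with hpA
  set pC : Sym2 V → Prop := fun e => ∀ v ∈ e, v ∉ F with hpC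
  set A := E.filter pA with hAdef
  set N := E.filter (fun e => ¬ pA e) with hNdef
  set B := N.filter (fun e => ¬ pC e) with hBdef
  set C := N.filter pC with hCdef
  set g : Sym2 V → ℕ := fun e => (Fᶜ.filter (fun v => v ∈ e)).card with hgdef
  -- |A| ≥ 17
  have hAset : {e ∈ G.edgeSet | ∀ v ∈ e, v ∈ F} = ↑A := by
    ext e
    simp only [Set.mem_setOf_eq, hAdef, Finset.coe_filter, hEdef,
      SimpleGraph.mem_edgeFinset, hpA]
  rw [hAset, Set.ncard_coe_finset] at hFedges
  -- partition of edges
  have hsplit1 : A.card + N.card = 35 := by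
    rw [hAdef, hNdef, Finset.card_filter_add_card_filter_not, hEcard]
  have hsplit2 : C.card + B.card = N.card := by
    rw [hCdef, hBdef, Finset.card_filter_add_card_filter_not]
  -- each vertex of F gives a distinct edge in B
  have hBcard : 7 ≤ B.card := by
    have hmap : ∀ v ∈ F, ∃ e ∈ B, v ∈ e := by
      intro v hv
      obtain ⟨w, hw, hadj⟩ := hout v hv
      refine ⟨s(v, w), ?_, by simp⟩
      refine Finset.mem_filter.mpr ⟨Finset.mem_filter.mpr ⟨?_, ?_⟩, ?_⟩
      · exact SimpleGraph.mem_edgeFinset.mpr hadj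
      · intro h; exact hw (h w (by simp))
      · intro h; exact h v (by simp) hv
    choose f hfB hfmem using hmap
    have hinj : Set.InjOn (fun v => if h : v ∈ F then f v h else s(v, v)) F := by
      intro v hv v' hv' heq
      have hvF : v ∈ F := hv
      have hv'F : v' ∈ F := hv'
      simp only [dif_pos hvF, dif_pos hv'F] at heq
      by_contra hne
      have h1 : v ∈ f v' hv'F := heq ▸ hfmem v hvF
      have h2 : v' ∈ f v' hv'F := hfmem v' hv'F
      have heq2 : f v' hv'F = s(v, v') := (Sym2.mem_and_mem_iff hne).mp ⟨h1, h2⟩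
      have hB' := hfB v' hv'F
      obtain ⟨hN', hnC⟩ := Finset.mem_filter.mp hB'
      obtain ⟨-, hnA⟩ := Finset.mem_filter.mp hN'
      apply hnA
      rw [heq2]
      intro u hu
      rcases Sym2.mem_iff.mp hu with rfl | rfl <;> assumption
    have := Finset.card_le_card_of_injOn _ (fun v hv => by
      have hv' : v ∈ F := hv; simp only [hv', dif_pos]; exact hfB v hv') hinj
    rwa [hF] at this
  -- degree sum double count
  have hFc : Fᶜ.card = 6 := by
    rw [Finset.card_compl, hV, hF]
  have hdegsum : ∀ v : V, G.degree v = (E.filter (fun e => v ∈ e)).card := by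
    intro v
    rw [← SimpleGraph.card_incidenceFinset_eq_degree, SimpleGraph.incidenceFinset_eq_filter]
  have hcount : ∑ v ∈ Fᶜ, G.degree v = ∑ e ∈ E, g e := by
    simp_rw [hdegsum, hgdef, Finset.card_filter]
    rw [Finset.sum_comm]
  have hlb : 30 ≤ ∑ v ∈ Fᶜ, G.degree v := by
    calc (30 : ℕ) = 6 * 5 := rfl
    _ = ∑ _v ∈ Fᶜ, 5 := by rw [Finset.sum_const, hFc, smul_eq_mul]
    _ ≤ ∑ v ∈ Fᶜ, G.degree v :=
        Finset.sum_le_sum (fun v hv => hdeg v (Finset.mem_compl.mp hv))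
  -- value of g on a nondiagonal pair
  have hval : ∀ a b : V, a ≠ b →
      g s(a, b) = (if a ∈ F then 0 else 1) + (if b ∈ F then 0 else 1) := by
    intro a b hab
    have hset : Fᶜ.filter (fun v => v ∈ s(a, b))
        = ({a, b} : Finset V).filter (fun v => v ∉ F) := by
      ext v
      simp only [Finset.mem_filter, Finset.mem_compl, Sym2.mem_iff, Finset.mem_insert,
        Finset.mem_singleton]
      tauto
    rw [hgdef]
    simp only []
    rw [hset, Finset.filter_insert, Finset.filter_singleton]
    by_cases ha : a ∈ F <;> by_cases hb : b ∈ F <;>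
      simp [ha, hb, Finset.card_insert_of_notMem, hab]
  have hndiag : ∀ e ∈ E, ¬ e.IsDiag := fun e he =>
    G.not_isDiag_of_mem_edgeSet (SimpleGraph.mem_edgeFinset.mp he)
  -- split the sum
  have h1 : ∑ e ∈ A, g e + ∑ e ∈ N, g e = ∑ e ∈ E, g e :=
    Finset.sum_filter_add_sum_filter_not E pA g
  have h2 : ∑ e ∈ C, g e + ∑ e ∈ B, g e = ∑ e ∈ N, g e :=
    Finset.sum_filter_add_sum_filter_not N pC g
  have hsumA : ∑ e ∈ A, g e = 0 := by
    apply Finset.sum_eq_zero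
    intro e he
    obtain ⟨heE, ha⟩ := Finset.mem_filter.mp he
    have hd := hndiag e heE
    clear he heE
    revert ha hd
    induction e using Sym2.ind with
    | _ a b =>
      intro ha hd
      have hab : a ≠ b := fun h => hd (by simp [h])
      rw [hval a b hab, if_pos (ha a (by simp)), if_pos (ha b (by simp))]
      rfl
  have hsumC : ∑ e ∈ C, g e = 2 * C.card := by
    rw [Finset.sum_congr rfl (fun e he => ?_), Finset.sum_const, smul_eq_mul, mul_comm]
    obtain ⟨hN', hc⟩ := Finset.mem_filter.mp he
    obtain ⟨heE, -⟩ := Finset.mem_filter.mp hN'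
    have hd := hndiag e heE
    clear he hN' heE
    revert hc hd
    induction e using Sym2.ind with
    | _ a b =>
      intro hc hd
      have hab : a ≠ b := fun h => hd (by simp [h])
      rw [hval a b hab, if_neg (hc a (by simp)), if_neg (hc b (by simp))]
  have hsumB : ∑ e ∈ B, g e = B.card := by
    rw [Finset.sum_congr rfl (fun e he => ?_), Finset.sum_const, smul_eq_mul, mul_one]
    obtain ⟨hN', hnC⟩ := Finset.mem_filter.mp he
    obtain ⟨heE, hnA⟩ := Finset.mem_filter.mp hN'
    have hd := hndiag e heE
    clear he hN' heE
    revert hnA hnC hd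
    induction e using Sym2.ind with
    | _ a b =>
      intro h₁ h₂ hd
      have hnA' : ¬ (∀ v ∈ s(a, b), v ∈ F) := by first | exact h₁ | exact h₂
      have hnC' : ¬ (∀ v ∈ s(a, b), v ∉ F) := by first | exact h₁ | exact h₂
      have hab : a ≠ b := fun h => hd (by simp [h])
      rw [hval a b hab]
      have hx : ¬ (a ∈ F ∧ b ∈ F) := fun ⟨ha, hb⟩ => hnA' (fun v hv => by
        rcases Sym2.mem_iff.mp hv with rfl | rfl <;> assumption)
      have hy : a ∈ F ∨ b ∈ F := by
        by_contra h
        push_neg at h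
        exact hnC' (fun v hv => by
          rcases Sym2.mem_iff.mp hv with rfl | rfl
          · exact h.1
          · exact h.2)
      by_cases ha : a ∈ F <;> by_cases hb : b ∈ F <;> simp [ha, hb] at hx hy ⊢
  rw [hcount, ← h1, ← h2, hsumA, hsumC, hsumB] at hlb
  omega
end
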